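/- Let (X,d) be a compact metric space and T : X → X a continuous map satisfying the Closing Lemma and having a point with dense orbit, and let f : X → ℝ be a continuous function satisfying the Walters property. Then f is cohomologous to zero if and only if lim_{n→∞} (1/n)‖S_n f‖_∞ = 0. In particular, lim_{n→∞} (1/n)‖S_n f‖_∞ = 0 if and only if sup_{n≥1} ‖S_n f‖_∞ < ∞. -/

import Mathlib

open Filter Topology

/-- Birkhoff sum `S_n f = ∑_{k=0}^{n-1} f ∘ T^k`. -/
noncomputable def birkhoff {X : Type*} (T : X → X) (f : X → ℝ) (n : ℕ) (x : X) : ℝ :=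
  ∑ k ∈ Finset.range n, f (T^[k] x)

lemma birkhoff_add {X : Type*} (T : X → X) (f : X → ℝ) (m n : ℕ) (x : X) :
    birkhoff T f (m + n) x = birkhoff T f m x + birkhoff T f n (T^[m] x) := by
  unfold birkhoff
  rw [Finset.sum_range_add]
  congr 1
  refine Finset.sum_congr rfl fun k _ => ?_
  rw [add_comm m k, Function.iterate_add_apply]

lemma birkhoff_telescope {X : Type*} (T : X → X) (f : X → ℝ) (q : X → ℝ)
    (hq : ∀ x, f x = q (T x) - q x) (n : ℕ) (x : X) :
    birkhoff T f n x = q (T^[n] x) - q x := by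
  induction n with
  | zero => simp [birkhoff]
  | succ n ih =>
    rw [birkhoff, Finset.sum_range_succ, ← birkhoff, ih, hq (T^[n] x),
      ← Function.iterate_succ_apply' T n x]
    ring

theorem statement8 {X : Type*} [MetricSpace X] [CompactSpace X]
    (T : X → X) (hT : Continuous T)
    (hClosing : ∀ ε > (0 : ℝ), ∃ δ > (0 : ℝ), ∀ (x : X) (n : ℕ), 1 ≤ n →
      dist (T^[n] x) x < δ →
      ∃ y : X, T^[n] y = y ∧ ∀ k < n, dist (T^[k] x) (T^[k] y) < ε)
    (hDense : ∃ x : X, Dense (Set.range fun n : ℕ => T^[n] x))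
    (f : X → ℝ) (hf : Continuous f)
    (hWalters : ∀ κ > (0 : ℝ), ∃ ε > (0 : ℝ), ∀ (x y : X) (n : ℕ), 1 ≤ n →
      (∀ k < n, dist (T^[k] x) (T^[k] y) < ε) →
        |birkhoff T f n x - birkhoff T f n y| < κ) :
    ((∃ q : X → ℝ, Continuous q ∧ ∀ x : X, f x = q (T x) - q x) ↔
      Tendsto (fun n : ℕ => (⨆ x : X, |birkhoff T f n x|) / (n : ℝ)) atTop (nhds 0)) ∧
    (Tendsto (fun n : ℕ => (⨆ x : X, |birkhoff T f n x|) / (n : ℝ)) atTop (nhds 0) ↔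
      ∃ K : ℝ, ∀ (n : ℕ), 1 ≤ n → ∀ x : X, |birkhoff T f n x| ≤ K) := by
  obtain ⟨x₀, hx₀⟩ := hDense
  haveI : Nonempty X := ⟨x₀⟩
  have hbc : ∀ n : ℕ, Continuous fun x : X => birkhoff T f n x := fun n =>
    continuous_finset_sum _ fun k _ => hf.comp (hT.iterate k)
  have hbdd : ∀ n : ℕ, BddAbove (Set.range fun x : X => |birkhoff T f n x|) := fun n =>
    (isCompact_range ((hbc n).abs)).bddAbove
  have hleA : ∀ (n : ℕ) (x : X), |birkhoff T f n x| ≤ ⨆ x : X, |birkhoff T f n x| :=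
    fun n x => le_ciSup (hbdd n) x
  have hAnn : ∀ n : ℕ, (0 : ℝ) ≤ ⨆ x : X, |birkhoff T f n x| :=
    fun n => (abs_nonneg _).trans (hleA n x₀)
  -- bounded → tendsto 0
  have hRQ : (∃ K : ℝ, ∀ (n : ℕ), 1 ≤ n → ∀ x : X, |birkhoff T f n x| ≤ K) →
      Tendsto (fun n : ℕ => (⨆ x : X, |birkhoff T f n x|) / (n : ℝ)) atTop (nhds 0) := by
    rintro ⟨K, hK⟩
    apply squeeze_zero' (g := fun n : ℕ => K / (n : ℝ))
    · exact Eventually.of_forall fun n => div_nonneg (hAnn n) (Nat.cast_nonneg n)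
    · filter_upwards [eventually_ge_atTop 1] with n hn
      have h1 : (⨆ x : X, |birkhoff T f n x|) ≤ K := ciSup_le fun x => hK n hn x
      have h2 : (0 : ℝ) < (n : ℝ) := by exact_mod_cast hn
      exact div_le_div_of_nonneg_right h1 h2.le
    · exact tendsto_const_div_atTop_nhds_zero_nat K
  -- coboundary → bounded
  have hPR : (∃ q : X → ℝ, Continuous q ∧ ∀ x : X, f x = q (T x) - q x) →
      ∃ K : ℝ, ∀ (n : ℕ), 1 ≤ n → ∀ x : X, |birkhoff T f n x| ≤ K := by
    rintro ⟨q, hq, hqf⟩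
    obtain ⟨C, hC⟩ : ∃ C : ℝ, ∀ x : X, |q x| ≤ C := by
      obtain ⟨C, hC⟩ := (isCompact_range hq.abs).bddAbove
      exact ⟨C, fun x => hC ⟨x, rfl⟩⟩
    refine ⟨2 * C, fun n _ x => ?_⟩
    rw [birkhoff_telescope T f q hqf n x]
    calc |q (T^[n] x) - q x| ≤ |q (T^[n] x)| + |q x| := abs_sub _ _
      _ ≤ 2 * C := by have := hC (T^[n] x); have := hC x; linarith
  -- tendsto 0 → coboundary
  have hQP : Tendsto (fun n : ℕ => (⨆ x : X, |birkhoff T f n x|) / (n : ℝ)) atTop (nhds 0) →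
      ∃ q : X → ℝ, Continuous q ∧ ∀ x : X, f x = q (T x) - q x := by
    intro H
    -- Birkhoff sums vanish on periodic orbits
    have per_zero : ∀ (y : X) (n : ℕ), 1 ≤ n → T^[n] y = y → birkhoff T f n y = 0 := by
      intro y n hn hy
      have hmul : ∀ m : ℕ, birkhoff T f (m * n) y = (m : ℝ) * birkhoff T f n y := by
        intro m
        induction m with
        | zero => simp [birkhoff]
        | succ m ih =>
          have hfix : T^[m * n] y = y := by
            rw [Nat.mul_comm, Function.iterate_mul]
            exact Function.iterate_fixed hy m
          have h1 : (m + 1) * n = m * n + n := by ring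
          rw [h1, birkhoff_add, ih, hfix]
          push_cast
          ring
      have hb : ∀ m : ℕ, 1 ≤ m →
          |birkhoff T f n y| ≤ (n : ℝ) * ((⨆ x : X, |birkhoff T f (m * n) x|) / ((m * n : ℕ) : ℝ)) := by
        intro m hm
        have h1 : (m : ℝ) * |birkhoff T f n y| ≤ ⨆ x : X, |birkhoff T f (m * n) x| := by
          have h2 := hleA (m * n) y
          rw [hmul m, abs_mul, Nat.abs_cast] at h2
          exact h2
        have hmpos : (0 : ℝ) < (m : ℝ) := by exact_mod_cast hm
        have hnpos : (0 : ℝ) < (n : ℝ) := by exact_mod_cast hn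
        have h3 : (n : ℝ) * ((⨆ x : X, |birkhoff T f (m * n) x|) / ((m * n : ℕ) : ℝ)) =
            (⨆ x : X, |birkhoff T f (m * n) x|) / (m : ℝ) := by
          push_cast
          field_simp
        rw [h3, le_div_iff₀ hmpos, mul_comm]
        exact h1
      have h1 : Tendsto (fun m : ℕ => m * n) atTop atTop :=
        tendsto_atTop_atTop.2 fun b => ⟨b, fun a ha =>
          le_trans ha (Nat.le_mul_of_pos_right a hn)⟩
      have h2 : Tendsto
          (fun m : ℕ => (n : ℝ) * ((⨆ x : X, |birkhoff T f (m * n) x|) / ((m * n : ℕ) : ℝ)))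
          atTop (nhds 0) := by
        have h3 := (H.comp h1).const_mul (n : ℝ)
        simpa using h3
      have h4 : |birkhoff T f n y| ≤ 0 :=
        ge_of_tendsto h2 (by filter_upwards [eventually_ge_atTop 1] with m hm using hb m hm)
      exact abs_nonpos_iff.mp h4
    -- small Birkhoff sums for approximate returns
    have approx : ∀ κ > (0 : ℝ), ∃ δ > (0 : ℝ), ∀ (x : X) (n : ℕ), 1 ≤ n →
        dist (T^[n] x) x < δ → |birkhoff T f n x| < κ := by
      intro κ hκ
      obtain ⟨ε, hε, hW⟩ := hWalters κ hκ
      obtain ⟨δ, hδ, hC⟩ := hClosing ε hε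
      refine ⟨δ, hδ, fun x n hn hd => ?_⟩
      obtain ⟨y, hy, hclose⟩ := hC x n hn hd
      have h1 := hW x y n hn hclose
      rwa [per_zero y n hn hy, sub_zero] at h1
    -- uniform estimate along the orbit of x₀
    have E : ∀ κ > (0 : ℝ), ∃ δ > (0 : ℝ), ∀ n m : ℕ,
        dist (T^[n] x₀) (T^[m] x₀) < δ →
        |birkhoff T f n x₀ - birkhoff T f m x₀| ≤ κ := by
      intro κ hκ
      obtain ⟨δ, hδ, hA'⟩ := approx κ hκ
      refine ⟨δ, hδ, ?_⟩
      have key : ∀ n m : ℕ, n ≤ m → dist (T^[n] x₀) (T^[m] x₀) < δ →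
          |birkhoff T f n x₀ - birkhoff T f m x₀| ≤ κ := by
        intro n m hnm hd
        rcases eq_or_lt_of_le hnm with rfl | hlt
        · simpa using hκ.le
        · have hb : birkhoff T f m x₀ =
              birkhoff T f n x₀ + birkhoff T f (m - n) (T^[n] x₀) := by
            conv_lhs => rw [show m = n + (m - n) by omega]
            exact birkhoff_add T f n (m - n) x₀
          have hdist : dist (T^[m - n] (T^[n] x₀)) (T^[n] x₀) < δ := by
            rw [← Function.iterate_add_apply, show m - n + n = m by omega]
            rwa [dist_comm] at hd
          have h1 := hA' (T^[n] x₀) (m - n) (by omega) hdist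
          rw [hb, show birkhoff T f n x₀ - (birkhoff T f n x₀ +
            birkhoff T f (m - n) (T^[n] x₀)) = -(birkhoff T f (m - n) (T^[n] x₀)) by ring,
            abs_neg]
          exact h1.le
      intro n m hd
      rcases le_total n m with h | h
      · exact key n m h hd
      · rw [abs_sub_comm]
        rw [dist_comm] at hd
        exact key m n h hd
    -- well-definedness of q on the orbit
    have wd : ∀ n m : ℕ, T^[n] x₀ = T^[m] x₀ →
        birkhoff T f n x₀ = birkhoff T f m x₀ := by
      intro n m heq
      by_contra hne
      have hpos : 0 < |birkhoff T f n x₀ - birkhoff T f m x₀| :=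
        abs_pos.2 (sub_ne_zero.2 hne)
      obtain ⟨δ, hδ, hE⟩ := E (|birkhoff T f n x₀ - birkhoff T f m x₀| / 2) (by positivity)
      have h1 := hE n m (by rw [heq]; simpa using hδ)
      linarith
    -- define q on the orbit and extend
    set S : Set X := Set.range fun n : ℕ => T^[n] x₀ with hS
    have hSdense : Dense S := hx₀
    let nOf : S → ℕ := fun s => (show ∃ n : ℕ, T^[n] x₀ = (s : X) from s.2).choose
    have hnOf : ∀ s : S, T^[nOf s] x₀ = (s : X) :=
      fun s => (show ∃ n : ℕ, T^[n] x₀ = (s : X) from s.2).choose_spec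
    let q₀ : S → ℝ := fun s => birkhoff T f (nOf s) x₀
    have hq₀UC : UniformContinuous q₀ := by
      rw [Metric.uniformContinuous_iff]
      intro κ hκ
      obtain ⟨δ, hδ, hE⟩ := E (κ / 2) (by positivity)
      refine ⟨δ, hδ, fun {a b} hab => ?_⟩
      have hd : dist (T^[nOf a] x₀) (T^[nOf b] x₀) < δ := by
        rw [hnOf a, hnOf b]
        rwa [Subtype.dist_eq] at hab
      have h1 := hE (nOf a) (nOf b) hd
      rw [Real.dist_eq]
      have : q₀ a = birkhoff T f (nOf a) x₀ := rfl
      linarith [h1]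
    have hui : IsUniformInducing (Subtype.val : S → X) :=
      isUniformEmbedding_subtype_val.isUniformInducing
    have hdr : DenseRange (Subtype.val : S → X) := hSdense.denseRange_val
    have di : IsDenseInducing (Subtype.val : S → X) := hui.isDenseInducing hdr
    let q : X → ℝ := di.extend q₀
    have hqC : Continuous q :=
      (uniformContinuous_uniformly_extend hui hdr hq₀UC).continuous
    have hq_orbit : ∀ n : ℕ, q (T^[n] x₀) = birkhoff T f n x₀ := by
      intro n
      have hmem : T^[n] x₀ ∈ S := ⟨n, rfl⟩
      have h1 : q (T^[n] x₀) = q₀ ⟨T^[n] x₀, hmem⟩ :=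
        di.extend_eq hq₀UC.continuous (⟨T^[n] x₀, hmem⟩ : S)
      rw [h1]
      exact wd _ n (hnOf ⟨T^[n] x₀, hmem⟩)
    refine ⟨q, hqC, ?_⟩
    have heqon : Set.EqOn (fun x => q (T x) - q x) f S := by
      rintro _ ⟨n, rfl⟩
      have h1 : T (T^[n] x₀) = T^[n + 1] x₀ := (Function.iterate_succ_apply' T n x₀).symm
      have h2 : birkhoff T f (n + 1) x₀ = birkhoff T f n x₀ + f (T^[n] x₀) := by
        rw [birkhoff, Finset.sum_range_succ, ← birkhoff]
      simp only [h1, hq_orbit, h2]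
      ring
    have hfun : (fun x => q (T x) - q x) = f :=
      Continuous.ext_on hSdense (by fun_prop) hf heqon
    exact fun x => (congrFun hfun x).symm
  exact ⟨⟨fun hP => hRQ (hPR hP), hQP⟩, ⟨fun hQ => hPR (hQP hQ), hRQ⟩⟩
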